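/- Let R_1,…,R_n be independent random variables and let Y_t = g_t(R_t) for measurable functions g_t with each Y_t integrable, t = 1,…,n. Then the optimal values over the two filtrations coincide: sup over stopping times τ of the filtration ℛ_t = σ(R_1,…,R_t) of E[Y_τ] equals sup over stopping times τ of the (smaller) filtration 𝒴_t = σ(Y_1,…,Y_t) of E[Y_τ]. -/

import Mathlib

open MeasureTheory ProbabilityTheory Finset
open scoped ENNReal Classical

noncomputable section

/-- The σ-algebra on `Ω` generated by the functions `f 1, …, f t`. -/
def genFilt {Ω β : Type*} [MeasurableSpace β] (f : ℕ → Ω → β) (t : ℕ) :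
    MeasurableSpace Ω :=
  ⨆ i ∈ Set.Icc 1 t, MeasurableSpace.comap (f i) inferInstance

/-- `τ` is a stopping time with values in `{1,…,n}` of the filtration generated by `f`. -/
def IsStopTime {Ω β : Type*} [MeasurableSpace β] (f : ℕ → Ω → β) (n : ℕ) (τ : Ω → ℕ) : Prop :=
  (∀ ω, τ ω ∈ Set.Icc 1 n) ∧ ∀ t, MeasurableSet[genFilt f t] {ω | τ ω = t}

/-- The family `(f i)_{i ∈ s}` is independent under `μ`. -/
def IndepSeq {Ω β : Type*} [MeasurableSpace Ω] [MeasurableSpace β]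
    (f : ℕ → Ω → β) (s : Set ℕ) (μ : Measure Ω) : Prop :=
  iIndepFun (β := fun _ : s => β) (m := fun _ : s => (inferInstance : MeasurableSpace β)) (fun i : s => f i.1) μ

/-- `N` is independent of the family `(f i)_{i ∈ s}`. -/
def IndepOfSeq {Ω β : Type*} [MeasurableSpace Ω] [MeasurableSpace β]
    (N : Ω → ℕ) (f : ℕ → Ω → β) (s : Set ℕ) (μ : Measure Ω) : Prop :=
  IndepFun N (fun ω (i : s) => f i.1 ω) μ

/-- The absolute rank `A_{t,k}` of `X t` among `X 1, …, X k`
(the largest observation has rank 1). -/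
def absRank {Ω : Type*} (X : ℕ → Ω → ℝ) (t k : ℕ) (ω : Ω) : ℕ :=
  ((Finset.Icc 1 k).filter fun j => X t ω ≤ X j ω).card

/-- The relative rank `R_t = A_{t,t}`. -/
def relRank {Ω : Type*} (X : ℕ → Ω → ℝ) (t : ℕ) (ω : Ω) : ℕ := absRank X t t ω

/-- `(X i)_{i ∈ s}` are i.i.d. with an atomless (continuous) common distribution. -/
def IIDContinuousOn {Ω : Type*} [MeasurableSpace Ω] (X : ℕ → Ω → ℝ) (s : Set ℕ)
    (μ : Measure Ω) : Prop :=
  (∀ i ∈ s, Measurable (X i)) ∧ IndepSeq X s μ ∧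
  (∀ i ∈ s, ∀ j ∈ s, IdentDistrib (X i) (X j) μ μ) ∧
  (∀ i ∈ s, ∀ x : ℝ, μ {ω | X i ω = x} = 0)

/-! ### Auxiliary material for Statement 4 -/

/-- Backward recursion for the (deterministic) Snell envelope values:
`optValAux μ n Y k` is the optimal value when `k` steps remain after time `n - k`. -/
noncomputable def optValAux {Ω : Type*} [MeasurableSpace Ω] (μ : Measure Ω) (n : ℕ)
    (Y : ℕ → Ω → ℝ) : ℕ → ℝ
  | 0 => ∫ ω, Y n ω ∂μ
  | (k+1) => ∫ ω, max (Y (n - (k+1)) ω) (optValAux μ n Y k) ∂μ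

/-- `vv μ n Y t` is the optimal value of stopping from time `t` on. -/
noncomputable def vv {Ω : Type*} [MeasurableSpace Ω] (μ : Measure Ω) (n : ℕ)
    (Y : ℕ → Ω → ℝ) (t : ℕ) : ℝ := optValAux μ n Y (n - t)

lemma vv_n {Ω : Type*} [MeasurableSpace Ω] (μ : Measure Ω) (n : ℕ) (Y : ℕ → Ω → ℝ) :
    vv μ n Y n = ∫ ω, Y n ω ∂μ := by
  simp [vv, Nat.sub_self, optValAux]

lemma vv_lt {Ω : Type*} [MeasurableSpace Ω] (μ : Measure Ω) (n : ℕ) (Y : ℕ → Ω → ℝ)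
    {t : ℕ} (ht : t < n) :
    vv μ n Y t = ∫ ω, max (Y t ω) (vv μ n Y (t+1)) ∂μ := by
  have e1 : n - t = (n - (t+1)) + 1 := by omega
  have e2 : n - ((n - (t+1)) + 1) = t := by omega
  rw [vv, e1, optValAux, e2, vv]

/-- Monotonicity of independence of σ-algebras. -/
lemma indep_mono' {Ω : Type*} {mΩ : MeasurableSpace Ω} {μ : Measure Ω}
    {m₁ m₂ m₁' m₂' : MeasurableSpace Ω} (h : Indep m₁ m₂ μ)
    (h1 : m₁' ≤ m₁) (h2 : m₂' ≤ m₂) : Indep m₁' m₂' μ := by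
  rw [Indep_iff] at h ⊢
  exact fun t1 t2 ht1 ht2 => h t1 t2 (h1 _ ht1) (h2 _ ht2)

lemma genFilt_mono {Ω β : Type*} [MeasurableSpace β] (f : ℕ → Ω → β) {s t : ℕ} (h : s ≤ t) :
    genFilt f s ≤ genFilt f t := by
  refine iSup₂_le fun i hi => ?_
  exact le_biSup (fun i => MeasurableSpace.comap (f i) inferInstance)
    (Set.mem_of_mem_of_subset hi (Set.Icc_subset_Icc_right h))

/-- if `R_1,…,R_n` are independent and `Y t = g t (R t)`, then the optimal
stopping values over the filtration generated by the `R`'s and over the (smaller)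
filtration generated by the `Y`'s coincide. -/
theorem stmt_4 {Ω : Type*} [MeasurableSpace Ω] (μ : Measure Ω) [IsProbabilityMeasure μ]
    (n : ℕ) (hn : 1 ≤ n)
    (R : ℕ → Ω → ℝ) (hRmeas : ∀ i, Measurable (R i))
    (hRindep : IndepSeq R (Set.Icc 1 n) μ)
    (g : ℕ → ℝ → ℝ) (hg : ∀ t, Measurable (g t))
    (Y : ℕ → Ω → ℝ) (hY : ∀ t ω, Y t ω = g t (R t ω))
    (hYint : ∀ t ∈ Set.Icc 1 n, Integrable (Y t) μ) :
    sSup {x : ℝ | ∃ τ : Ω → ℕ, IsStopTime R n τ ∧ x = ∫ ω, Y (τ ω) ω ∂μ}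
      = sSup {x : ℝ | ∃ τ : Ω → ℕ, IsStopTime Y n τ ∧ x = ∫ ω, Y (τ ω) ω ∂μ} := by
  classical
  -- notation
  set v : ℕ → ℝ := vv μ n Y with hvdef
  -- basic measurability facts
  have hYmeas : ∀ t, Measurable (Y t) := by
    intro t
    have : Y t = fun ω => g t (R t ω) := funext (hY t)
    rw [this]; exact (hg t).comp (hRmeas t)
  have hgenR_le : ∀ t, genFilt R t ≤ ‹MeasurableSpace Ω› :=
    fun t => iSup₂_le fun i _ => (hRmeas i).comap_le
  have hgenY_le : ∀ t, genFilt Y t ≤ genFilt R t := by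
    intro t
    refine iSup₂_le fun i hi => ?_
    have : Y i = g i ∘ R i := funext (hY i)
    rw [this, ← MeasurableSpace.comap_comp]
    exact le_trans (MeasurableSpace.comap_mono (hg i).comap_le)
      (le_biSup (fun i => MeasurableSpace.comap (R i) inferInstance) hi)
  have hgenY_le' : ∀ t, genFilt Y t ≤ ‹MeasurableSpace Ω› :=
    fun t => le_trans (hgenY_le t) (hgenR_le t)
  -- Y-stopping times are R-stopping times
  have hYstopR : ∀ τ : Ω → ℕ, IsStopTime Y n τ → IsStopTime R n τ :=
    fun τ hτ => ⟨hτ.1, fun t => hgenY_le t _ (hτ.2 t)⟩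
  -- the "one step look ahead" random variable
  set V : ℕ → Ω → ℝ := fun t ω => if t < n then max (Y t ω) (v (t+1)) else Y t ω with hVdef
  have hVY : ∀ t ω, Y t ω ≤ V t ω := by
    intro t ω; by_cases h : t < n <;> simp [hVdef, h, le_max_left]
  have hVv : ∀ t ω, t < n → v (t+1) ≤ V t ω := by
    intro t ω h; simp [hVdef, h, le_max_right]
  have hVint : ∀ t, 1 ≤ t → t ≤ n → Integrable (V t) μ := by
    intro t h1 h2
    by_cases h : t < n
    · have := (hYint t ⟨h1, h2⟩).sup (integrable_const (v (t+1)))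
      refine this.congr (Filter.Eventually.of_forall fun ω => ?_)
      simp [hVdef, h, Pi.sup_apply]
    · refine (hYint t ⟨h1, h2⟩).congr (Filter.Eventually.of_forall fun ω => ?_)
      simp [hVdef, h]
  have hVmeas : ∀ t, Measurable (V t) := by
    intro t; by_cases h : t < n
    · have : V t = fun ω => max (Y t ω) (v (t+1)) := funext fun ω => by simp [hVdef, h]
      rw [this]; exact (hYmeas t).max measurable_const
    · have : V t = Y t := funext fun ω => by simp [hVdef, h]
      rw [this]; exact hYmeas t
  -- v t is the mean of V t
  have hvV : ∀ t, 1 ≤ t → t ≤ n → v t = ∫ ω, V t ω ∂μ := by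
    intro t h1 h2
    by_cases h : t < n
    · rw [hvdef, vv_lt μ n Y h]
      exact integral_congr_ae (Filter.Eventually.of_forall fun ω => by simp [hVdef, h, hvdef])
    · have hteq : t = n := by omega
      rw [hvdef, hteq, vv_n]
      exact integral_congr_ae (Filter.Eventually.of_forall fun ω => by
        simp [hVdef, hteq])
  -- independence: the past is independent of V t
  have hfact : ∀ t, 1 ≤ t → t ≤ n → ∀ A : Set Ω, MeasurableSet[genFilt R (t-1)] A →
      ∫ ω in A, V t ω ∂μ = (μ A).toReal * v t := by
    intro t h1 h2 A hA
    have hA' : MeasurableSet A := hgenR_le (t-1) _ hA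
    -- independence of σ-algebras
    have hind : Indep (genFilt R (t-1)) (MeasurableSpace.comap (R t) inferInstance) μ := by
      have h := (iIndepFun_iff_iIndep _ _ _).mp hRindep
      have h2' := indep_iSup_of_disjoint (fun i => (hRmeas i.1).comap_le) h
        (S := {i : ↥(Set.Icc 1 n) | i.1 < t}) (T := {i : ↥(Set.Icc 1 n) | i.1 < t}ᶜ)
        disjoint_compl_right
      refine indep_mono' h2' ?_ ?_
      · refine iSup₂_le fun i hi => ?_
        have hin : i ∈ Set.Icc 1 n := ⟨hi.1, by have := hi.2; omega⟩
        have : (⟨i, hin⟩ : ↥(Set.Icc 1 n)) ∈ {i : ↥(Set.Icc 1 n) | i.1 < t} := by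
          simp only [Set.mem_setOf_eq]; have := hi.2; omega
        exact le_biSup (fun j : ↥(Set.Icc 1 n) => MeasurableSpace.comap (R j.1) inferInstance) this
      · have hin : t ∈ Set.Icc 1 n := ⟨h1, h2⟩
        have : (⟨t, hin⟩ : ↥(Set.Icc 1 n)) ∈ {i : ↥(Set.Icc 1 n) | i.1 < t}ᶜ := by
          simp only [Set.mem_compl_iff, Set.mem_setOf_eq]; omega
        exact le_biSup (fun j : ↥(Set.Icc 1 n) => MeasurableSpace.comap (R j.1) inferInstance) this
    -- IndepFun of the indicator and V t
    have hcomapV : MeasurableSpace.comap (V t) inferInstance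
        ≤ MeasurableSpace.comap (R t) inferInstance := by
      have hco : V t = (fun x => if t < n then max (g t x) (v (t+1)) else g t x) ∘ R t := by
        funext ω; by_cases h : t < n <;> simp [hVdef, h, hY]
      have hmh : Measurable (fun x => if t < n then max (g t x) (v (t+1)) else g t x) := by
        by_cases h : t < n <;> simp only [h, if_true, if_false]
        · exact (hg t).max measurable_const
        · exact hg t
      rw [hco, ← MeasurableSpace.comap_comp]
      exact MeasurableSpace.comap_mono hmh.comap_le
    have hindf : IndepFun (A.indicator (fun _ => (1:ℝ))) (V t) μ := by
      rw [IndepFun_iff_Indep]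
      refine indep_mono' hind ?_ hcomapV
      exact Measurable.comap_le (measurable_const.indicator hA)
    -- compute
    have hprod : (fun ω => A.indicator (fun _ => (1:ℝ)) ω * V t ω) = A.indicator (V t) := by
      funext ω; by_cases h : ω ∈ A <;> simp [h]
    have hint1 : Integrable (A.indicator fun _ => (1:ℝ)) μ :=
      (integrable_const (1:ℝ)).indicator hA'
    have hmul := hindf.integral_fun_mul_eq_mul_integral hint1.aestronglyMeasurable (hVint t h1 h2).aestronglyMeasurable
    rw [← integral_indicator hA', ← hprod]
    have : ∫ ω, A.indicator (fun _ => (1:ℝ)) ω * V t ω ∂μ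
        = (∫ ω, A.indicator (fun _ => (1:ℝ)) ω ∂μ) * ∫ ω, V t ω ∂μ := hmul
    rw [this, integral_indicator_const (1:ℝ) hA', hvV t h1 h2]
    simp [measureReal_def]
  -- integrability of the stopped process
  have hYτint : ∀ τ : Ω → ℕ, IsStopTime R n τ → Integrable (fun ω => Y (τ ω) ω) μ := by
    intro τ hτ
    have hτms : ∀ t, MeasurableSet {ω | τ ω = t} := fun t => hgenR_le t _ (hτ.2 t)
    have heq : (fun ω => Y (τ ω) ω)
        = fun ω => ∑ t ∈ Finset.Icc 1 n, ({ω | τ ω = t}).indicator (Y t) ω := by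
      funext ω
      rw [Finset.sum_eq_single (τ ω)]
      · exact (Set.indicator_of_mem (show ω ∈ {ω' | τ ω' = τ ω} from rfl) (Y (τ ω))).symm
      · intro b _ hb
        exact Set.indicator_of_notMem (fun h => hb h.symm) (Y b)
      · intro hmem
        exact absurd (Finset.mem_Icc.mpr ⟨(hτ.1 ω).1, (hτ.1 ω).2⟩) hmem
    rw [heq]
    exact integrable_finset_sum _ fun t ht =>
      (hYint t (by simpa using Finset.mem_Icc.mp ht)).indicator (hτms t)
  -- measurability of {t ≤ τ} in the past σ-algebra
  have hges : ∀ τ : Ω → ℕ, IsStopTime R n τ → ∀ t, 1 ≤ t →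
      MeasurableSet[genFilt R (t-1)] {ω | t ≤ τ ω} := by
    intro τ hτ t ht
    have hset : {ω | t ≤ τ ω} = (⋃ s ∈ Finset.Icc 1 (t-1), {ω | τ ω = s})ᶜ := by
      ext ω
      have h1 := (hτ.1 ω).1
      simp only [Set.mem_setOf_eq, Set.mem_compl_iff, Set.mem_iUnion, Finset.mem_Icc,
        not_exists, not_and]
      constructor
      · intro h s hs heq; omega
      · intro h
        by_contra hc
        exact h (τ ω) ⟨h1, by omega⟩ rfl
    rw [hset]
    refine (MeasurableSet.biUnion (Finset.Icc 1 (t-1)).countable_toSet fun s hs => ?_).compl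
    exact genFilt_mono R (by simp only [Finset.coe_Icc, Set.mem_Icc] at hs; omega) _ (hτ.2 s)
  -- THE KEY INEQUALITY (backward induction)
  have key : ∀ τ : Ω → ℕ, IsStopTime R n τ → ∀ k t, t + k = n → 1 ≤ t →
      ∫ ω in {ω | t ≤ τ ω}, Y (τ ω) ω ∂μ ≤ (μ {ω | t ≤ τ ω}).toReal * v t := by
    intro τ hτ k
    induction k with
    | zero =>
      intro t htk ht1
      have hteq : t = n := by omega
      have hset : {ω | t ≤ τ ω} = {ω | τ ω = t} := by
        ext ω; have := (hτ.1 ω).2; simp only [Set.mem_setOf_eq]; omega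
      have hA : MeasurableSet[genFilt R (t-1)] {ω | t ≤ τ ω} := hges τ hτ t ht1
      have hA' : MeasurableSet {ω | t ≤ τ ω} := hgenR_le (t-1) _ hA
      have h1 : ∫ ω in {ω | t ≤ τ ω}, Y (τ ω) ω ∂μ = ∫ ω in {ω | t ≤ τ ω}, V t ω ∂μ := by
        refine setIntegral_congr_fun hA' fun ω hω => ?_
        have hωt : τ ω = t := by rw [hset] at hω; exact hω
        rw [hωt, hVdef]; simp [hteq]
      rw [h1, hfact t ht1 (le_of_eq hteq) _ hA]
    | succ k ih =>
      intro t htk ht1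
      have htn : t < n := by omega
      have hA : MeasurableSet[genFilt R (t-1)] {ω | t ≤ τ ω} := hges τ hτ t ht1
      have hA' : MeasurableSet {ω | t ≤ τ ω} := hgenR_le (t-1) _ hA
      have hAe : MeasurableSet {ω | τ ω = t} := hgenR_le t _ (hτ.2 t)
      have hAn : MeasurableSet {ω | t+1 ≤ τ ω} :=
        hgenR_le t _ (hges τ hτ (t+1) (by omega))
      have hsplit : {ω | t ≤ τ ω} = {ω | τ ω = t} ∪ {ω | t+1 ≤ τ ω} := by
        ext ω; simp only [Set.mem_setOf_eq, Set.mem_union]; omega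
      have hdisj : Disjoint {ω | τ ω = t} {ω | t+1 ≤ τ ω} := by
        rw [Set.disjoint_left]; intro ω h1 h2
        simp only [Set.mem_setOf_eq] at h1 h2; omega
      have hIτ := (hYτint τ hτ).integrableOn (s := {ω | τ ω = t})
      have hIτ' := (hYτint τ hτ).integrableOn (s := {ω | t+1 ≤ τ ω})
      have hIV := (hVint t ht1 (le_of_lt htn)).integrableOn (s := {ω | τ ω = t})
      have hIV' := (hVint t ht1 (le_of_lt htn)).integrableOn (s := {ω | t+1 ≤ τ ω})
      have hLHS : ∫ ω in {ω | t ≤ τ ω}, Y (τ ω) ω ∂μ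
          = ∫ ω in {ω | τ ω = t}, Y (τ ω) ω ∂μ + ∫ ω in {ω | t+1 ≤ τ ω}, Y (τ ω) ω ∂μ := by
        rw [hsplit, setIntegral_union hdisj hAn hIτ hIτ']
      have hRHS : ∫ ω in {ω | τ ω = t}, V t ω ∂μ + ∫ ω in {ω | t+1 ≤ τ ω}, V t ω ∂μ
          = (μ {ω | t ≤ τ ω}).toReal * v t := by
        rw [← setIntegral_union hdisj hAn hIV hIV', ← hsplit]
        exact hfact t ht1 (le_of_lt htn) _ hA
      have step1 : ∫ ω in {ω | τ ω = t}, Y (τ ω) ω ∂μ ≤ ∫ ω in {ω | τ ω = t}, V t ω ∂μ := by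
        have : ∫ ω in {ω | τ ω = t}, Y (τ ω) ω ∂μ = ∫ ω in {ω | τ ω = t}, Y t ω ∂μ :=
          setIntegral_congr_fun hAe fun ω hω => by
            simp only [Set.mem_setOf_eq] at hω; rw [hω]
        rw [this]
        exact setIntegral_mono_on ((hYint t ⟨ht1, le_of_lt htn⟩).integrableOn) hIV hAe
          fun ω _ => hVY t ω
      have step2 : ∫ ω in {ω | t+1 ≤ τ ω}, Y (τ ω) ω ∂μ
          ≤ ∫ ω in {ω | t+1 ≤ τ ω}, V t ω ∂μ := by
        have h1 := ih (t+1) (by omega) (by omega)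
        have h2 : (μ {ω | t+1 ≤ τ ω}).toReal * v (t+1)
            = ∫ _ω in {ω | t+1 ≤ τ ω}, v (t+1) ∂μ := by
          rw [setIntegral_const, smul_eq_mul, measureReal_def]
        have h3 : ∫ _ω in {ω | t+1 ≤ τ ω}, v (t+1) ∂μ
            ≤ ∫ ω in {ω | t+1 ≤ τ ω}, V t ω ∂μ := by
          refine setIntegral_mono_on (integrableOn_const (measure_ne_top μ _))
            hIV' hAn fun ω _ => hVv t ω htn
        calc ∫ ω in {ω | t+1 ≤ τ ω}, Y (τ ω) ω ∂μ ≤ (μ {ω | t+1 ≤ τ ω}).toReal * v (t+1) := h1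
          _ = ∫ _ω in {ω | t+1 ≤ τ ω}, v (t+1) ∂μ := h2
          _ ≤ ∫ ω in {ω | t+1 ≤ τ ω}, V t ω ∂μ := h3
      rw [hLHS]
      exact le_trans (add_le_add step1 step2) (le_of_eq hRHS)
  -- THE GREEDY STOPPING TIME
  set P : Ω → ℕ → Prop := fun ω t => 1 ≤ t ∧ t < n ∧ v (t+1) ≤ Y t ω with hPdef
  set τstar : Ω → ℕ := fun ω => if h : ∃ t, P ω t then Nat.find h else n with hτsdef
  have hτs_mem : ∀ ω, τstar ω ∈ Set.Icc 1 n := by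
    intro ω
    simp only [hτsdef]
    split_ifs with h
    · have := Nat.find_spec h
      exact ⟨this.1, le_of_lt this.2.1⟩
    · exact ⟨hn, le_rfl⟩
  have hgreedy1 : ∀ ω t, 1 ≤ t → t < n → t < τstar ω → Y t ω < v (t+1) := by
    intro ω t h1 h2 h3
    by_contra hc
    push_neg at hc
    have hex : ∃ s, P ω s := ⟨t, h1, h2, hc⟩
    have : τstar ω ≤ t := by
      simp only [hτsdef, dif_pos hex]
      exact Nat.find_min' hex ⟨h1, h2, hc⟩
    omega
  have hgreedy2 : ∀ ω, τstar ω < n → v (τstar ω + 1) ≤ Y (τstar ω) ω := by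
    intro ω h
    simp only [hτsdef] at h ⊢
    split_ifs at h ⊢ with hex
    · exact (Nat.find_spec hex).2.2
    · omega
  -- τstar is a Y-stopping time
  have hτs_stop : IsStopTime Y n τstar := by
    refine ⟨hτs_mem, fun t => ?_⟩
    have hYset : ∀ s, 1 ≤ s → s ≤ t → MeasurableSet[genFilt Y t] {ω | v (s+1) ≤ Y s ω} := by
      intro s h1 h2
      refine le_biSup (fun i => MeasurableSpace.comap (Y i) inferInstance)
        (⟨h1, h2⟩ : s ∈ Set.Icc 1 t) _ ?_
      exact ⟨Set.Ici (v (s+1)), measurableSet_Ici, rfl⟩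
    by_cases htn : 1 ≤ t ∧ t ≤ n
    · by_cases htlt : t < n
      · have hset : {ω | τstar ω = t}
            = {ω | v (t+1) ≤ Y t ω} ∩ ⋂ s ∈ Set.Ico 1 t, {ω | v (s+1) ≤ Y s ω}ᶜ := by
          ext ω
          simp only [Set.mem_setOf_eq, Set.mem_inter_iff, Set.mem_iInter, Set.mem_compl_iff,
            Set.mem_Ico]
          constructor
          · intro h
            constructor
            · have := hgreedy2 ω (by omega)
              rw [h] at this; exact this
            · intro s hs
              exact fun hc => absurd hc (not_le.mpr (hgreedy1 ω s hs.1 (by omega) (by omega)))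
          · rintro ⟨hP, hmin⟩
            have hex : ∃ s, P ω s := ⟨t, htn.1, htlt, hP⟩
            simp only [hτsdef, dif_pos hex]
            have hle : Nat.find hex ≤ t := Nat.find_min' hex ⟨htn.1, htlt, hP⟩
            have hge : t ≤ Nat.find hex := by
              rw [Nat.le_find_iff]
              intro s hs hPs
              rcases hPs with ⟨hs1, hs2, hs3⟩
              exact hmin s ⟨hs1, hs⟩ hs3
            omega
        rw [hset]
        exact (hYset t htn.1 le_rfl).inter
          (MeasurableSet.biInter (Set.to_countable _) fun s hs =>
            (hYset s hs.1 (le_of_lt hs.2)).compl)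
      · have hteq : t = n := by omega
        have hset : {ω | τstar ω = t} = ⋂ s ∈ Set.Ico 1 t, {ω | v (s+1) ≤ Y s ω}ᶜ := by
          ext ω
          simp only [Set.mem_setOf_eq, Set.mem_iInter, Set.mem_compl_iff, Set.mem_Ico]
          constructor
          · intro h s hs
            exact fun hc => absurd hc
              (not_le.mpr (hgreedy1 ω s hs.1 (by omega) (by omega)))
          · intro hmin
            have hnex : ¬ ∃ s, P ω s := by
              rintro ⟨s, hs1, hs2, hs3⟩
              exact hmin s ⟨hs1, by omega⟩ hs3
            simp only [hτsdef, dif_neg hnex]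
            omega
        rw [hset]
        exact MeasurableSet.biInter (Set.to_countable _) fun s hs =>
          (hYset s hs.1 (le_of_lt hs.2)).compl
    · have hset : {ω | τstar ω = t} = ∅ := by
        ext ω
        simp only [Set.mem_setOf_eq, Set.mem_empty_iff_false, iff_false]
        intro h
        have := hτs_mem ω
        rw [h] at this
        exact htn ⟨this.1, this.2⟩
      rw [hset]
      exact @MeasurableSet.empty Ω (genFilt Y t)
  have hτs_stopR : IsStopTime R n τstar := hYstopR τstar hτs_stop
  -- THE KEY EQUALITY for τstar (backward induction)
  have keyEq : ∀ k t, t + k = n → 1 ≤ t →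
      ∫ ω in {ω | t ≤ τstar ω}, Y (τstar ω) ω ∂μ = (μ {ω | t ≤ τstar ω}).toReal * v t := by
    intro k
    induction k with
    | zero =>
      intro t htk ht1
      have hteq : t = n := by omega
      have hset : {ω | t ≤ τstar ω} = {ω | τstar ω = t} := by
        ext ω; have := (hτs_mem ω).2; simp only [Set.mem_setOf_eq]; omega
      have hA : MeasurableSet[genFilt R (t-1)] {ω | t ≤ τstar ω} := hges τstar hτs_stopR t ht1
      have hA' : MeasurableSet {ω | t ≤ τstar ω} := hgenR_le (t-1) _ hA
      have h1 : ∫ ω in {ω | t ≤ τstar ω}, Y (τstar ω) ω ∂μ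
          = ∫ ω in {ω | t ≤ τstar ω}, V t ω ∂μ := by
        refine setIntegral_congr_fun hA' fun ω hω => ?_
        have hωt : τstar ω = t := by rw [hset] at hω; exact hω
        rw [hωt, hVdef]; simp [hteq]
      rw [h1, hfact t ht1 (le_of_eq hteq) _ hA]
    | succ k ih =>
      intro t htk ht1
      have htn : t < n := by omega
      have hA : MeasurableSet[genFilt R (t-1)] {ω | t ≤ τstar ω} := hges τstar hτs_stopR t ht1
      have hA' : MeasurableSet {ω | t ≤ τstar ω} := hgenR_le (t-1) _ hA
      have hAe : MeasurableSet {ω | τstar ω = t} := hgenR_le t _ (hτs_stopR.2 t)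
      have hAn : MeasurableSet {ω | t+1 ≤ τstar ω} :=
        hgenR_le t _ (hges τstar hτs_stopR (t+1) (by omega))
      have hsplit : {ω | t ≤ τstar ω} = {ω | τstar ω = t} ∪ {ω | t+1 ≤ τstar ω} := by
        ext ω; simp only [Set.mem_setOf_eq, Set.mem_union]; omega
      have hdisj : Disjoint {ω | τstar ω = t} {ω | t+1 ≤ τstar ω} := by
        rw [Set.disjoint_left]; intro ω h1 h2
        simp only [Set.mem_setOf_eq] at h1 h2; omega
      have hIτ := (hYτint τstar hτs_stopR).integrableOn (s := {ω | τstar ω = t})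
      have hIτ' := (hYτint τstar hτs_stopR).integrableOn (s := {ω | t+1 ≤ τstar ω})
      have hIV := (hVint t ht1 (le_of_lt htn)).integrableOn (s := {ω | τstar ω = t})
      have hIV' := (hVint t ht1 (le_of_lt htn)).integrableOn (s := {ω | t+1 ≤ τstar ω})
      have hLHS : ∫ ω in {ω | t ≤ τstar ω}, Y (τstar ω) ω ∂μ
          = ∫ ω in {ω | τstar ω = t}, Y (τstar ω) ω ∂μ
            + ∫ ω in {ω | t+1 ≤ τstar ω}, Y (τstar ω) ω ∂μ := by
        rw [hsplit, setIntegral_union hdisj hAn hIτ hIτ']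
      have hRHS : ∫ ω in {ω | τstar ω = t}, V t ω ∂μ + ∫ ω in {ω | t+1 ≤ τstar ω}, V t ω ∂μ
          = (μ {ω | t ≤ τstar ω}).toReal * v t := by
        rw [← setIntegral_union hdisj hAn hIV hIV', ← hsplit]
        exact hfact t ht1 (le_of_lt htn) _ hA
      have step1 : ∫ ω in {ω | τstar ω = t}, Y (τstar ω) ω ∂μ
          = ∫ ω in {ω | τstar ω = t}, V t ω ∂μ := by
        refine setIntegral_congr_fun hAe fun ω hω => ?_
        simp only [Set.mem_setOf_eq] at hω
        have hvy : v (t+1) ≤ Y t ω := by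
          have := hgreedy2 ω (by omega)
          rw [hω] at this; exact this
        rw [hω, hVdef]
        simp only [if_pos htn]
        exact (max_eq_left hvy).symm
      have step2 : ∫ ω in {ω | t+1 ≤ τstar ω}, Y (τstar ω) ω ∂μ
          = ∫ ω in {ω | t+1 ≤ τstar ω}, V t ω ∂μ := by
        have h1 := ih (t+1) (by omega) (by omega)
        have h2 : (μ {ω | t+1 ≤ τstar ω}).toReal * v (t+1)
            = ∫ _ω in {ω | t+1 ≤ τstar ω}, v (t+1) ∂μ := by
          rw [setIntegral_const, smul_eq_mul, measureReal_def]
        have h3 : ∫ _ω in {ω | t+1 ≤ τstar ω}, v (t+1) ∂μ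
            = ∫ ω in {ω | t+1 ≤ τstar ω}, V t ω ∂μ := by
          refine setIntegral_congr_fun hAn fun ω hω => ?_
          simp only [Set.mem_setOf_eq] at hω
          have := hgreedy1 ω t ht1 htn (by omega)
          rw [hVdef]
          simp only [if_pos htn]
          exact (max_eq_right (le_of_lt this)).symm
        rw [h1, h2, h3]
      rw [hLHS, step1, step2, hRHS]
  -- value of any R-stopping time is at most v 1; value of τstar is exactly v 1
  have huniv : ∀ τ : Ω → ℕ, (∀ ω, τ ω ∈ Set.Icc 1 n) → {ω | 1 ≤ τ ω} = Set.univ := by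
    intro τ hmem
    ext ω; simp only [Set.mem_setOf_eq, Set.mem_univ, iff_true]
    exact (hmem ω).1
  have hub : ∀ τ : Ω → ℕ, IsStopTime R n τ → ∫ ω, Y (τ ω) ω ∂μ ≤ v 1 := by
    intro τ hτ
    have h := key τ hτ (n-1) 1 (by omega) le_rfl
    rw [huniv τ hτ.1] at h
    rw [setIntegral_univ] at h
    simpa using h
  have hstar : ∫ ω, Y (τstar ω) ω ∂μ = v 1 := by
    have h := keyEq (n-1) 1 (by omega) le_rfl
    rw [huniv τstar hτs_mem] at h
    rw [setIntegral_univ] at h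
    simpa using h
  -- final comparison of suprema
  set S := {x : ℝ | ∃ τ : Ω → ℕ, IsStopTime R n τ ∧ x = ∫ ω, Y (τ ω) ω ∂μ} with hSdef
  set T := {x : ℝ | ∃ τ : Ω → ℕ, IsStopTime Y n τ ∧ x = ∫ ω, Y (τ ω) ω ∂μ} with hTdef
  have hTS : T ⊆ S := by
    rintro x ⟨τ, hτ, hx⟩
    exact ⟨τ, hYstopR τ hτ, hx⟩
  have hubS : ∀ x ∈ S, x ≤ v 1 := by
    rintro x ⟨τ, hτ, hx⟩
    rw [hx]; exact hub τ hτ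
  have hv1T : v 1 ∈ T := ⟨τstar, hτs_stop, hstar.symm⟩
  have hbddS : BddAbove S := ⟨v 1, hubS⟩
  have hbddT : BddAbove T := hbddS.mono hTS
  have hneT : T.Nonempty := ⟨v 1, hv1T⟩
  refine le_antisymm ?_ (csSup_le_csSup hbddS hneT hTS)
  refine csSup_le (hneT.mono hTS) fun x hx => ?_
  exact le_trans (hubS x hx) (le_csSup hbddT hv1T)
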